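/- Let G be a finite group and p a prime. If p does not divide the index of x for every element x of G, then a Sylow p-subgroup of G is an abelian direct factor of G; that is, the Sylow p-subgroup P is abelian, normal in G, and there exists a normal subgroup H of G with P ∩ H = 1 and PH = G. -/

import Mathlib

/-- A finite group is not the union of conjugates of a proper subgroup:
if every element has a conjugate in `K`, then `K = ⊤`. -/
private theorem aux_jordan_cover {G : Type*} [Group G] [Finite G] (K : Subgroup G)
    (h : ∀ x : G, ∃ g : G, g * x * g⁻¹ ∈ K) : K = ⊤ := by
  by_contra hK
  have hne1 : K.index ≠ 1 := fun h1 => hK (Subgroup.index_eq_one.mp h1)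
  have h0 : K.index ≠ 0 := Subgroup.index_ne_zero_of_finite
  cases nonempty_fintype G
  letI : Fintype (G ⧸ K) := Fintype.ofFinite _
  letI : ∀ a : G, Fintype (MulAction.fixedBy (G ⧸ K) a) := fun _ => Fintype.ofFinite _
  letI : Fintype (MulAction.orbitRel.Quotient G (G ⧸ K)) := Fintype.ofFinite _
  have hsub : Subsingleton (MulAction.orbitRel.Quotient G (G ⧸ K)) :=
    (MulAction.pretransitive_iff_subsingleton_quotient G (G ⧸ K)).mp inferInstance
  have hnonempty : Nonempty (MulAction.orbitRel.Quotient G (G ⧸ K)) :=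
    ⟨Quotient.mk _ ((1 : G) : G ⧸ K)⟩
  have hΩ : Fintype.card (MulAction.orbitRel.Quotient G (G ⧸ K)) = 1 :=
    le_antisymm (Fintype.card_le_one_iff_subsingleton.mpr hsub)
      Fintype.card_pos
  have hsum := MulAction.sum_card_fixedBy_eq_card_orbits_mul_card_group G (G ⧸ K)
  rw [hΩ, one_mul] at hsum
  have hpos : ∀ a : G, 1 ≤ Fintype.card (MulAction.fixedBy (G ⧸ K) a) := by
    intro a
    obtain ⟨g, hg⟩ := h a
    have hmem : ((g⁻¹ : G) : G ⧸ K) ∈ MulAction.fixedBy (G ⧸ K) a := by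
      show a • ((g⁻¹ : G) : G ⧸ K) = ((g⁻¹ : G) : G ⧸ K)
      rw [MulAction.Quotient.smul_mk, QuotientGroup.eq, smul_eq_mul]
      have : (a * g⁻¹)⁻¹ * g⁻¹ = (g * a * g⁻¹)⁻¹ := by group
      rw [this]
      exact K.inv_mem hg
    exact Fintype.card_pos_iff.mpr ⟨⟨_, hmem⟩⟩
  have hone : 1 < Fintype.card (MulAction.fixedBy (G ⧸ K) (1 : G)) := by
    have huniv : MulAction.fixedBy (G ⧸ K) (1 : G) = Set.univ := by
      ext b; simp [MulAction.mem_fixedBy]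
    have hcardQ : Fintype.card (G ⧸ K) = K.index := by
      rw [← Nat.card_eq_fintype_card]; rfl
    have : Fintype.card (MulAction.fixedBy (G ⧸ K) (1 : G)) = Fintype.card (G ⧸ K) :=
      Fintype.card_congr ((Equiv.setCongr huniv).trans (Equiv.Set.univ _))
    omega
  have hlt : Fintype.card G < ∑ a : G, Fintype.card (MulAction.fixedBy (G ⧸ K) a) := by
    calc Fintype.card G = ∑ _a : G, 1 := by simp
    _ < ∑ a : G, Fintype.card (MulAction.fixedBy (G ⧸ K) a) :=
      Finset.sum_lt_sum (fun i _ => hpos i) ⟨1, Finset.mem_univ _, hone⟩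
  rw [hsum] at hlt
  exact lt_irrefl _ hlt

/-- If `p` does not divide the index of any element of the finite group `G`,
then a Sylow `p`-subgroup of `G` is an abelian direct factor of `G`. -/
theorem sylow_abelian_direct_factor_of_not_dvd_index
    {G : Type*} [Group G] [Finite G] (p : ℕ) (hp : p.Prime)
    (h : ∀ x : G, ¬ p ∣ (Subgroup.centralizer {x}).index)
    (P : Sylow p G) :
    IsMulCommutative (P : Subgroup G) ∧ (P : Subgroup G).Normal ∧
      ∃ H : Subgroup G, H.Normal ∧ (P : Subgroup G) ⊓ H = ⊥ ∧ (P : Subgroup G) ⊔ H = ⊤ := by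
  haveI : Fact p.Prime := ⟨hp⟩
  -- Step 1: every element of `G` centralizes some conjugate of `P`.
  have key : ∀ x : G, ∃ g : G, g * x * g⁻¹ ∈
      Subgroup.centralizer ((P : Subgroup G) : Set G) := by
    intro x
    set C := Subgroup.centralizer ({x} : Set G) with hCdef
    obtain ⟨S⟩ : Nonempty (Sylow p C) := inferInstance
    have hmap : ((S : Subgroup C).map C.subtype) ≤ C := Subgroup.map_subtype_le _
    obtain ⟨R, hR⟩ := (S.2.map C.subtype).exists_le_sylow
    have hcard : Nat.card ((S : Subgroup C).map C.subtype) = Nat.card (S : Subgroup C) :=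
      (Nat.card_congr (Subgroup.equivMapOfInjective _ _ C.subtype_injective).toEquiv).symm
    have hfac : (Nat.card C).factorization p = (Nat.card G).factorization p := by
      have h1 : Nat.card C ≠ 0 := Nat.card_pos.ne'
      have h2 : C.index ≠ 0 := Subgroup.index_ne_zero_of_finite
      have hmul : Nat.card C * C.index = Nat.card G := Subgroup.card_mul_index C
      rw [← hmul, Nat.factorization_mul h1 h2, Finsupp.add_apply,
        Nat.factorization_eq_zero_of_not_dvd (h x), add_zero]
    have heq : (S : Subgroup C).map C.subtype = (R : Subgroup G) :=
      Subgroup.eq_of_le_of_card_ge hR (le_of_eq (by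
        rw [hcard, S.card_eq_multiplicity, R.card_eq_multiplicity, hfac]))
    have hRC : (R : Subgroup G) ≤ C := heq ▸ hmap
    obtain ⟨g, hg⟩ := MulAction.exists_smul_eq G P R
    refine ⟨g⁻¹, Subgroup.mem_centralizer_iff.mpr fun y hy => ?_⟩
    have hyR : g * y * g⁻¹ ∈ (R : Subgroup G) := by
      rw [← hg, Sylow.coe_subgroup_smul]
      simpa using Subgroup.smul_mem_pointwise_smul y (MulAut.conj g) _ hy
    have hcomm : (g * y * g⁻¹) * x = x * (g * y * g⁻¹) :=
      Subgroup.mem_centralizer_singleton_iff.mp (hRC hyR)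
    have hgoal : y * (g⁻¹ * x * g) = (g⁻¹ * x * g) * y := by
      have h2 := congrArg (fun t => g⁻¹ * t * g) hcomm
      simpa [mul_assoc] using h2
    simpa [mul_assoc] using hgoal
  -- Step 2: hence the centralizer of `P` is all of `G`, i.e. `P ≤ Z(G)`.
  have hcen : Subgroup.centralizer ((P : Subgroup G) : Set G) = ⊤ :=
    aux_jordan_cover _ key
  have hPZ : (P : Subgroup G) ≤ Subgroup.center G := by
    intro z hz
    exact Subgroup.centralizer_eq_top_iff_subset.mp hcen hz
  -- commutativity
  have hcommP : IsMulCommutative (P : Subgroup G) := by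
    constructor
    constructor
    intro a b
    have hab := Subgroup.mem_center_iff.mp (hPZ b.2) a.1
    exact Subtype.ext (by simpa using hab)
  -- normality
  have hnormP : (P : Subgroup G).Normal := by
    constructor
    intro n hn g
    have hcomm := Subgroup.mem_center_iff.mp (hPZ hn) g
    rw [hcomm, mul_assoc, mul_inv_cancel, mul_one]
    exact hn
  haveI := hnormP
  -- Schur-Zassenhaus complement
  obtain ⟨n, hn⟩ := IsPGroup.iff_card.mp P.2
  have hcop : Nat.Coprime (Nat.card (P : Subgroup G)) (P : Subgroup G).index := by
    rw [hn]
    exact Nat.Coprime.pow_left _ ((hp.coprime_iff_not_dvd).mpr P.not_dvd_index)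
  obtain ⟨H, hH⟩ := Subgroup.exists_right_complement'_of_coprime hcop
  refine ⟨hcommP, hnormP, H, ?_, ?_, hH.sup_eq_top⟩
  · constructor
    intro k hk g
    obtain ⟨⟨⟨z, hz⟩, ⟨w, hw⟩⟩, hzw, -⟩ := hH.existsUnique g
    simp only [Subgroup.coe_mk] at hzw
    have hzc : ∀ t : G, t * z = z * t := fun t => Subgroup.mem_center_iff.mp (hPZ hz) t
    have h1 : g * k * g⁻¹ = z * (w * k * w⁻¹) * z⁻¹ := by rw [← hzw]; group
    have h2 : z * (w * k * w⁻¹) * z⁻¹ = w * k * w⁻¹ := by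
      rw [← hzc (w * k * w⁻¹), mul_assoc, mul_inv_cancel, mul_one]
    rw [h1, h2]
    exact H.mul_mem (H.mul_mem hw hk) (H.inv_mem hw)
  · exact disjoint_iff.mp hH.disjoint
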